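/- arXiv:2304.11231 — 3 statements merged into one kernel-verified Lean document; each statement's English description precedes it below -/
import Mathlib

section
/- Fix A₀ ∈ [0, π/2) and set d₀ = (cos A₀)/4. Let q ≥ 1 and let t ∈ ℂ satisfy |arg t| ≤ A₀ and 0 < |t| ≤ T₀. Consider G(W) = τW + 1 + E(W) where τ = 1 − qt + r(t) with |r(t)| ≤ C|t|² and |E(W)| ≤ C'/|W|. Then for T₀ sufficiently small (depending on q, A₀, C, C') and for all W with |W| > 1/(q d₀ |t|), one has |G(W)| < |W|. -/
open Real

/-- Attraction of `∞` for `G(W) = τW + 1 + O(1/W)` with `τ = 1 − qt + O(t²)` when `t`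
lies in a Stolz angle: for `T₀` small enough and `|W| > 1/(q d₀ |t|)`, `|G(W)| < |W|`. -/
theorem G_near_infinity_attracting (q : ℕ) (hq : 1 ≤ q) (A₀ : ℝ)
    (hA₀ : A₀ ∈ Set.Ico 0 (π / 2)) (C C' : ℝ) (hC : 0 < C) (hC' : 0 < C') :
    ∃ T₀ > 0, ∀ (t : ℂ), t ≠ 0 → |t.arg| ≤ A₀ → ‖t‖ ≤ T₀ →
      ∀ (τ : ℂ) (G E : ℂ → ℂ),
        ‖τ - (1 - (q : ℂ) * t)‖ ≤ C * ‖t‖ ^ 2 →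
        (∀ W : ℂ, W ≠ 0 → ‖E W‖ ≤ C' / ‖W‖) →
        (∀ W : ℂ, G W = τ * W + 1 + E W) →
        ∀ W : ℂ, ‖W‖ > 1 / ((q : ℝ) * (Real.cos A₀ / 4) * ‖t‖) →
          ‖G W‖ < ‖W‖ := by
  obtain ⟨hA0, hA1⟩ := hA₀
  have hc : 0 < Real.cos A₀ := Real.cos_pos_of_mem_Ioo ⟨by linarith [Real.pi_pos], hA1⟩
  have hc1 : Real.cos A₀ ≤ 1 := Real.cos_le_one A₀
  have hq0 : (0:ℝ) < (q:ℝ) := by exact_mod_cast Nat.pos_of_ne_zero (by omega)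
  refine ⟨min (min (Real.cos A₀ / q) ((q:ℝ)*Real.cos A₀/(8*C))) (2/(C'*q)),
    by positivity, ?_⟩
  intro t ht0 harg hT τ G E hτ hE hG W hW
  have hs : 0 < ‖t‖ := norm_pos_iff.mpr ht0
  have hT1 : (q:ℝ) * ‖t‖ ≤ Real.cos A₀ := by
    have := le_trans hT (le_trans (min_le_left _ _) (min_le_left _ _))
    rw [le_div_iff₀ hq0] at this
    linarith
  have hT2 : C * ‖t‖ ≤ (q:ℝ)*Real.cos A₀/8 := by
    have := le_trans hT (le_trans (min_le_left _ _) (min_le_right _ _))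
    rw [le_div_iff₀ (by positivity : (0:ℝ) < 8*C)] at this
    linarith
  have hT3 : C' * ((q:ℝ) * ‖t‖) ≤ 2 := by
    have := le_trans hT (min_le_right _ _)
    rw [le_div_iff₀ (by positivity : (0:ℝ) < C'*q)] at this
    linarith
  -- real part lower bound in the Stolz angle
  have hRe : Real.cos A₀ * ‖t‖ ≤ t.re := by
    have h1 : Real.cos A₀ ≤ Real.cos |t.arg| :=
      Real.cos_le_cos_of_nonneg_of_le_pi (abs_nonneg _) (by linarith [Real.pi_pos]) harg
    rw [Real.cos_abs] at h1
    have h2 : Real.cos t.arg = t.re / ‖t‖ := Complex.cos_arg ht0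
    have h3 : ‖t‖ = ‖t‖ := rfl
    rw [h2, le_div_iff₀ (by rw [← h3]; exact hs)] at h1
    rw [← h3] at h1
    linarith [h1]
  -- bound on ‖τ‖
  have e2 : ‖t‖^2 = t.re^2 + t.im^2 := by
    rw [Complex.sq_norm, Complex.normSq_apply]; ring
  have e1 : ‖(1:ℂ) - (q:ℂ)*t‖^2 = 1 - 2*(q:ℝ)*t.re + (q:ℝ)^2*(t.re^2 + t.im^2) := by
    rw [Complex.sq_norm, Complex.normSq_apply]
    simp [Complex.sub_re, Complex.sub_im, Complex.mul_re, Complex.mul_im]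
    ring
  have key : ‖(1:ℂ) - (q:ℂ)*t‖^2 ≤ (1 - (q:ℝ)*Real.cos A₀*‖t‖/2)^2 := by
    rw [e1, ← e2]
    linarith [mul_le_mul_of_nonneg_left hT1 (mul_pos hq0 hs).le,
      mul_le_mul_of_nonneg_left hRe (by positivity : (0:ℝ) ≤ 2*(q:ℝ)),
      sq_nonneg ((q:ℝ)*Real.cos A₀*‖t‖)]
  have hhalf : 0 ≤ 1 - (q:ℝ)*Real.cos A₀*‖t‖/2 := by
    linarith [mul_le_mul_of_nonneg_left hT1 hc.le,
      mul_le_mul hc1 hc1 hc.le (by norm_num : (0:ℝ) ≤ 1)]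
  have key2 : ‖(1:ℂ) - (q:ℂ)*t‖ ≤ 1 - (q:ℝ)*Real.cos A₀*‖t‖/2 := by
    have := Real.sqrt_le_sqrt key
    rwa [Real.sqrt_sq (norm_nonneg _), Real.sqrt_sq hhalf] at this
  have hτn : ‖τ‖ ≤ 1 - 3*((q:ℝ)*Real.cos A₀*‖t‖)/8 := by
    have h1 : ‖τ‖ ≤ ‖τ - ((1:ℂ) - (q:ℂ)*t)‖ + ‖(1:ℂ) - (q:ℂ)*t‖ := by
      have := norm_sub_norm_le τ ((1:ℂ) - (q:ℂ)*t)
      linarith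
    have h2 : C * ‖t‖^2 ≤ ((q:ℝ)*Real.cos A₀/8) * ‖t‖ := by
      linarith [mul_le_mul_of_nonneg_right hT2 (norm_nonneg t)]
    linarith [hτ, key2, h1, h2]
  -- the point W
  have hpos : (0:ℝ) < (q:ℝ) * (Real.cos A₀/4) * ‖t‖ := by positivity
  have hWpos : 0 < ‖W‖ := lt_trans (by positivity) hW
  have hW0 : W ≠ 0 := norm_pos_iff.mp hWpos
  have h4 : 4 < (q:ℝ)*Real.cos A₀*‖t‖*‖W‖ := by
    rw [gt_iff_lt, div_lt_iff₀ hpos] at hW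
    linarith
  have haw : 4 < (q:ℝ)*‖t‖*‖W‖ := by
    linarith [mul_nonneg (mul_nonneg (by linarith : (0:ℝ) ≤ 1 - Real.cos A₀)
      (mul_pos hq0 hs).le) hWpos.le]
  have hEW : C'/‖W‖ < 1/2 := by
    rw [div_lt_iff₀ hWpos]
    linarith [mul_le_mul_of_nonneg_right hT3 hWpos.le,
      mul_lt_mul_of_pos_left haw hC']
  have hGW : ‖G W‖ ≤ ‖τ‖*‖W‖ + 1 + C'/‖W‖ := by
    rw [hG W]
    calc ‖τ * W + 1 + E W‖ ≤ ‖τ * W + 1‖ + ‖E W‖ := norm_add_le _ _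
      _ ≤ ‖τ * W‖ + ‖(1:ℂ)‖ + ‖E W‖ := by linarith [norm_add_le (τ*W) (1:ℂ)]
      _ = ‖τ‖*‖W‖ + 1 + ‖E W‖ := by rw [norm_mul, norm_one]
      _ ≤ ‖τ‖*‖W‖ + 1 + C'/‖W‖ := by linarith [hE W hW0]
  have hτW : ‖τ‖*‖W‖ ≤ (1 - 3*((q:ℝ)*Real.cos A₀*‖t‖)/8)*‖W‖ :=
    mul_le_mul_of_nonneg_right hτn (le_of_lt hWpos)
  linarith [hGW, hτW, hEW, h4]
end

section
/- Fix A₀ ∈ [0, π/2) and set d₀ = (cos A₀)/4. Let q ≥ 1 and t ∈ ℂ with |arg t| ≤ A₀, 0 < |t| ≤ T₀, and consider G(W) = τW + 1 + E(W) where τ = 1 + qt + r(t), |r(t)| ≤ C|t|², |E(W)| ≤ C'/|W|. Then for T₀ sufficiently small, for all W with |W| > 1/(q d₀ |t|), one has |G(W)| > |W|. -/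
set_option maxHeartbeats 1000000
open Real

/-- Repulsion at `∞` for `G(W) = τW + 1 + O(1/W)` with `τ = 1 + qt + O(t²)` when `t`
lies in a Stolz angle: for `T₀` small enough and `|W| > 1/(q d₀ |t|)`, `|G(W)| > |W|`. -/
theorem G_near_infinity_repelling (q : ℕ) (hq : 1 ≤ q) (A₀ : ℝ)
    (hA₀ : A₀ ∈ Set.Ico 0 (π / 2)) (C C' : ℝ) (hC : 0 < C) (hC' : 0 < C') :
    ∃ T₀ > 0, ∀ (t : ℂ), t ≠ 0 → |t.arg| ≤ A₀ → ‖t‖ ≤ T₀ →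
      ∀ (τ : ℂ) (G E : ℂ → ℂ),
        ‖τ - (1 + (q : ℂ) * t)‖ ≤ C * ‖t‖ ^ 2 →
        (∀ W : ℂ, W ≠ 0 → ‖E W‖ ≤ C' / ‖W‖) →
        (∀ W : ℂ, G W = τ * W + 1 + E W) →
        ∀ W : ℂ, ‖W‖ > 1 / ((q : ℝ) * (Real.cos A₀ / 4) * ‖t‖) →
          ‖G W‖ > ‖W‖ := by
  obtain ⟨hA0, hA1⟩ := hA₀
  have hpi := Real.pi_pos
  have hc : 0 < Real.cos A₀ :=
    Real.cos_pos_of_mem_Ioo ⟨by linarith, hA1⟩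
  have hq1 : (1:ℝ) ≤ (q:ℝ) := by exact_mod_cast hq
  have hqpos : (0:ℝ) < (q:ℝ) := by linarith
  refine ⟨min ((q*Real.cos A₀)/(2*C)) (1/(C'*((q:ℝ)*(Real.cos A₀/4)))),
    lt_min (by positivity) (by positivity), ?_⟩
  intro t ht hargt htT τ G E hτ hE hG W hW
  have ha : 0 < ‖t‖ := norm_pos_iff.mpr ht
  have hcosarg : Real.cos A₀ ≤ Real.cos t.arg := by
    have h := Real.cos_le_cos_of_nonneg_of_le_pi (abs_nonneg t.arg)
      (by linarith) hargt
    rwa [Real.cos_abs] at h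
  have htre : ‖t‖ * Real.cos A₀ ≤ t.re := by
    have h := Complex.cos_arg ht
    have h2 : t.re = ‖t‖ * Real.cos t.arg := by
      rw [h]
      rw [mul_div_assoc', mul_comm, mul_div_assoc, div_self (norm_ne_zero_iff.mpr ht), mul_one]
    rw [h2]
    exact mul_le_mul_of_nonneg_left hcosarg ha.le
  have hre : ((1 + (q:ℂ)*t)).re = 1 + (q:ℝ) * t.re := by
    simp [Complex.add_re, Complex.mul_re]
  have h1 : 1 + (q:ℝ)*(‖t‖*Real.cos A₀) ≤ ‖(1 + (q:ℂ)*t)‖ := by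
    have hle : ((1 + (q:ℂ)*t)).re ≤ ‖(1 + (q:ℂ)*t)‖ := by
      exact Complex.re_le_norm _
    rw [hre] at hle
    nlinarith [mul_le_mul_of_nonneg_left htre hqpos.le]
  have h2 : ‖(1+(q:ℂ)*t)‖ - ‖τ‖ ≤ C*‖t‖^2 := by
    calc ‖(1+(q:ℂ)*t)‖ - ‖τ‖ ≤ ‖(1+(q:ℂ)*t) - τ‖ := norm_sub_norm_le _ _
    _ = ‖τ - (1+(q:ℂ)*t)‖ := norm_sub_rev _ _
    _ ≤ C*‖t‖^2 := hτ
  have hT1 : ‖t‖ ≤ (q*Real.cos A₀)/(2*C) := le_trans htT (min_le_left _ _)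
  have hT2 : ‖t‖ ≤ 1/(C'*((q:ℝ)*(Real.cos A₀/4))) := le_trans htT (min_le_right _ _)
  have hCt : C*‖t‖ ≤ q*Real.cos A₀/2 := by
    rw [le_div_iff₀ (by positivity)] at hT1
    rw [le_div_iff₀ (by positivity : (0:ℝ) < 2)]
    nlinarith [hT1]
  -- ‖τ‖ ≥ 1 + 2 q d₀ ‖t‖  where d₀ = cos A₀ / 4
  have hτlow : 1 + 2*((q:ℝ)*(Real.cos A₀/4))*‖t‖ ≤ ‖τ‖ := by
    nlinarith [mul_le_mul_of_nonneg_right hCt ha.le]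
  have hbpos : 0 < ‖W‖ := lt_trans (by positivity) hW
  have hWne : W ≠ 0 := norm_pos_iff.mp hbpos
  have hprod : 1 < (q:ℝ)*(Real.cos A₀/4)*‖t‖*‖W‖ := by
    rw [gt_iff_lt, div_lt_iff₀ (by positivity)] at hW
    nlinarith [hW]
  have hE' : ‖E W‖ ≤ C'/‖W‖ := hE W hWne
  have hEb : C'/‖W‖ < 1 := by
    have hT2' : C'*((q:ℝ)*(Real.cos A₀/4))*‖t‖ ≤ 1 := by
      rw [le_div_iff₀ (by positivity)] at hT2
      linarith [hT2]
    have h1W : 1/‖W‖ < (q:ℝ)*(Real.cos A₀/4)*‖t‖ := by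
      rw [div_lt_iff₀ hbpos]
      nlinarith [hprod]
    calc C'/‖W‖ = C' * (1/‖W‖) := by ring
    _ < C' * ((q:ℝ)*(Real.cos A₀/4)*‖t‖) := mul_lt_mul_of_pos_left h1W hC'
    _ ≤ 1 := by nlinarith [hT2']
  have key : ‖τ‖*‖W‖ - 1 - ‖E W‖ ≤ ‖G W‖ := by
    rw [hG W]
    have hcalc : ‖τ‖*‖W‖ ≤ ‖τ*W+1+E W‖ + (1 + ‖E W‖) := by
      calc ‖τ‖*‖W‖ = ‖τ*W‖ := (norm_mul _ _).symm
      _ = ‖(τ*W + 1 + E W) - (1 + E W)‖ := by congr 1; ring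
      _ ≤ ‖τ*W+1+E W‖ + ‖1+E W‖ := norm_sub_le _ _
      _ ≤ ‖τ*W+1+E W‖ + (1 + ‖E W‖) := by
          have := norm_add_le (1:ℂ) (E W)
          simp only [norm_one] at this
          linarith
    linarith
  have hτW : ‖W‖ + 2 < ‖τ‖*‖W‖ := by
    nlinarith [mul_le_mul_of_nonneg_right hτlow hbpos.le, hprod]
  have : ‖W‖ < ‖G W‖ := by linarith
  exact this
end

section
/- Let G(W) = τW + 1 + E(W) with |E(W)| ≤ (cos A₀)/8 on {|W| ≥ r̂}, where τ ∈ ℂ satisfies (|τ|−1)/(2|τ−1|) ≥ (3/8)cos A₀ and τ ≠ 1. Set B = 1/(1−τ) and d₀ = (cos A₀)/4. Then for any W with |W| ≥ r̂ and |W − B| ≥ |B|/2, one has |G(W) − B| ≥ |W − B| + d₀. -/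
open Real

/-- Uniform repulsion away from the fixed point `B = 1/(1−τ)`:
if `|G(W) − (τW+1)| ≤ (cos A₀)/8` on `{|W| ≥ rhat}` and
`(|τ|−1)/(2|τ−1|) ≥ (3/8)cos A₀`, then for `|W| ≥ rhat` and `|W − B| ≥ |B|/2`
we have `|G(W) − B| ≥ |W − B| + d₀` with `d₀ = (cos A₀)/4`. -/
theorem repulsion_from_fixed_point (A₀ : ℝ) (hA₀ : A₀ ∈ Set.Ico 0 (π / 2))
    (τ : ℂ) (hτ1 : τ ≠ 1)
    (hτ : (‖τ‖ - 1) / (2 * ‖τ - 1‖) ≥ (3 / 8) * Real.cos A₀)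
    (G : ℂ → ℂ) (rhat : ℝ)
    (hG : ∀ W : ℂ, rhat ≤ ‖W‖ → ‖G W - (τ * W + 1)‖ ≤ Real.cos A₀ / 8) :
    ∀ W : ℂ, rhat ≤ ‖W‖ → ‖W - 1 / (1 - τ)‖ ≥ ‖(1 : ℂ) / (1 - τ)‖ / 2 →
      ‖G W - 1 / (1 - τ)‖ ≥ ‖W - 1 / (1 - τ)‖ + Real.cos A₀ / 4 := by
  intro W hW hWB
  have hcos : 0 < Real.cos A₀ :=
    Real.cos_pos_of_mem_Ioo ⟨by linarith [hA₀.1, Real.pi_pos], hA₀.2⟩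
  have hτ1' : (1 : ℂ) - τ ≠ 0 := sub_ne_zero.mpr (Ne.symm hτ1)
  set B : ℂ := 1 / (1 - τ) with hB
  have hkey : τ * W + 1 - B = τ * (W - B) := by
    rw [hB]; field_simp; ring
  have hE := hG W hW
  have hsplit : G W - B = τ * (W - B) - -(G W - (τ * W + 1)) := by
    rw [← hkey]; ring
  have h1 : ‖τ * (W - B)‖ - ‖-(G W - (τ * W + 1))‖ ≤ ‖G W - B‖ := by
    rw [hsplit]; exact norm_sub_norm_le _ _
  rw [norm_neg, norm_mul] at h1
  -- norms
  have hτ1norm : 0 < ‖τ - 1‖ := by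
    rw [norm_pos_iff]; exact sub_ne_zero.mpr hτ1
  have hBnorm : ‖B‖ = 1 / ‖τ - 1‖ := by
    rw [hB, norm_div, norm_one, ← norm_neg, neg_sub]
  have hτge : ‖τ‖ - 1 ≥ (3 / 4) * Real.cos A₀ * ‖τ - 1‖ := by
    have h := (le_div_iff₀ (by positivity : (0:ℝ) < 2 * ‖τ - 1‖)).mp hτ
    nlinarith
  have hτpos : ‖τ‖ - 1 > 0 := by nlinarith
  have hWBge : ‖W - B‖ ≥ 1 / (2 * ‖τ - 1‖) := by
    rw [hBnorm] at hWB
    calc ‖W - B‖ ≥ (1 / ‖τ - 1‖) / 2 := hWB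
      _ = 1 / (2 * ‖τ - 1‖) := by ring
  have hmain : (‖τ‖ - 1) * ‖W - B‖ ≥ 3 / 8 * Real.cos A₀ := by
    calc (‖τ‖ - 1) * ‖W - B‖ ≥ (‖τ‖ - 1) * (1 / (2 * ‖τ - 1‖)) := by
          exact mul_le_mul_of_nonneg_left hWBge (le_of_lt hτpos)
      _ = (‖τ‖ - 1) / (2 * ‖τ - 1‖) := by ring
      _ ≥ 3 / 8 * Real.cos A₀ := hτ
  nlinarith [hE, h1]
end
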